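/- Let (Ω, P) be a probability space, n ∈ ℕ, and let u₁,…,uₙ and v₁,…,vₙ be nonnegative integrable functions such that E[(∑_{m=1}^{k−1} u_m² + vₖ²)^{1/2}] ≤ E[(∑_{m=1}^k u_m²)^{1/2}] for all 1 ≤ k ≤ n. Then E[(∑_{m=1}^n v_m²)^{1/2}] ≤ 2 E[(∑_{m=1}^n u_m²)^{1/2}]. -/

import Mathlib

open MeasureTheory Finset

lemma aux_sqrt_sum_sq_le {ι : Type*} (s : Finset ι) (x : ι → ℝ) :
    Real.sqrt (∑ i ∈ s, x i ^ 2) ≤ ∑ i ∈ s, |x i| := by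
  have h1 : ∑ i ∈ s, x i ^ 2 ≤ (∑ i ∈ s, |x i|) ^ 2 := by
    calc ∑ i ∈ s, x i ^ 2 ≤ ∑ i ∈ s, |x i| * ∑ j ∈ s, |x j| := by
          apply Finset.sum_le_sum
          intro i hi
          have h2 : |x i| ≤ ∑ j ∈ s, |x j| :=
            Finset.single_le_sum (fun j _ => abs_nonneg (x j)) hi
          calc x i ^ 2 = |x i| * |x i| := by rw [← sq_abs]; ring
            _ ≤ |x i| * ∑ j ∈ s, |x j| := mul_le_mul_of_nonneg_left h2 (abs_nonneg _)
      _ = (∑ i ∈ s, |x i|) ^ 2 := by rw [← Finset.sum_mul]; ring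
  calc Real.sqrt (∑ i ∈ s, x i ^ 2) ≤ Real.sqrt ((∑ i ∈ s, |x i|) ^ 2) := Real.sqrt_le_sqrt h1
    _ = ∑ i ∈ s, |x i| := Real.sqrt_sq (Finset.sum_nonneg fun i _ => abs_nonneg _)

lemma aux_sqrt_add_le (a b : ℝ) (ha : 0 ≤ a) (hb : 0 ≤ b) :
    Real.sqrt (a + b) ≤ Real.sqrt a + Real.sqrt b := by
  have h1 : a + b ≤ (Real.sqrt a + Real.sqrt b) ^ 2 := by
    nlinarith [Real.sq_sqrt ha, Real.sq_sqrt hb, Real.sqrt_nonneg a, Real.sqrt_nonneg b,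
      mul_nonneg (Real.sqrt_nonneg a) (Real.sqrt_nonneg b)]
  calc Real.sqrt (a + b) ≤ Real.sqrt ((Real.sqrt a + Real.sqrt b) ^ 2) := Real.sqrt_le_sqrt h1
    _ = _ := Real.sqrt_sq (by positivity)

lemma aux_sqrt_diff_mono (a A c : ℝ) (ha : 0 ≤ a) (haA : a ≤ A) (hc : 0 ≤ c) :
    Real.sqrt (A + c) - Real.sqrt A ≤ Real.sqrt (a + c) - Real.sqrt a := by
  have hA : 0 ≤ A := le_trans ha haA
  set p := Real.sqrt a with hp'
  set q := Real.sqrt A with hq'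
  set r := Real.sqrt (a + c) with hr'
  set t := Real.sqrt (A + c) with ht'
  have hp : 0 ≤ p := Real.sqrt_nonneg _
  have hq : 0 ≤ q := Real.sqrt_nonneg _
  have hr : 0 ≤ r := Real.sqrt_nonneg _
  have hpq : p ≤ q := Real.sqrt_le_sqrt haA
  have hpr : p ≤ r := Real.sqrt_le_sqrt (by linarith)
  have hqt : q ≤ t := Real.sqrt_le_sqrt (by linarith)
  have hrt : r ≤ t := Real.sqrt_le_sqrt (by linarith)
  have hp2 : p ^ 2 = a := Real.sq_sqrt ha
  have hq2 : q ^ 2 = A := Real.sq_sqrt hA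
  have hr2 : r ^ 2 = a + c := Real.sq_sqrt (by linarith)
  have ht2 : t ^ 2 = A + c := Real.sq_sqrt (by linarith)
  rcases eq_or_lt_of_le (by positivity : (0:ℝ) ≤ r + p) with h0 | h0
  · -- r + p = 0, so r = p = 0, a = 0, c = 0
    have hr0 : r = 0 := by linarith
    have hp0 : p = 0 := by linarith
    have hc0 : c = 0 := by nlinarith
    have : t = q := by nlinarith
    linarith
  · -- (t - q)(t + q) = c = (r - p)(r + p), t + q ≥ r + p > 0
    nlinarith [mul_nonneg (sub_nonneg.mpr hqt) (sub_nonneg.mpr hpr)]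

lemma aux_pointwise {ι : Type*} (s : Finset ι) (A : ℝ) (b : ι → ℝ) (hA : 0 ≤ A)
    (hb : ∀ k ∈ s, 0 ≤ b k) :
    Real.sqrt (∑ k ∈ s, b k) ≤
      Real.sqrt A + ∑ k ∈ s, (Real.sqrt (A + b k) - Real.sqrt A) := by
  set V2 := ∑ k ∈ s, b k with hV2
  have hV2nn : 0 ≤ V2 := Finset.sum_nonneg hb
  rcases eq_or_lt_of_le hV2nn with hV0 | hVpos
  · rw [← hV0, Real.sqrt_zero]
    have : ∀ k ∈ s, 0 ≤ Real.sqrt (A + b k) - Real.sqrt A := by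
      intro k hk
      have : Real.sqrt A ≤ Real.sqrt (A + b k) := Real.sqrt_le_sqrt (by linarith [hb k hk])
      linarith
    have := Finset.sum_nonneg this
    have := Real.sqrt_nonneg A
    linarith
  · set s0 := Real.sqrt A with hs0'
    set w := Real.sqrt (A + V2) with hw'
    have hs0 : 0 ≤ s0 := Real.sqrt_nonneg _
    have hwV : Real.sqrt V2 ≤ w := Real.sqrt_le_sqrt (by linarith)
    have hVpos' : 0 < Real.sqrt V2 := Real.sqrt_pos.mpr hVpos
    have hws : 0 < w + s0 := by linarith
    have hterm : ∀ k ∈ s, b k / (w + s0) ≤ Real.sqrt (A + b k) - Real.sqrt A := by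
      intro k hk
      have hbk : 0 ≤ b k := hb k hk
      have hbkV : b k ≤ V2 := Finset.single_le_sum hb hk
      set x := Real.sqrt (A + b k) with hx'
      have hx2 : x ^ 2 = A + b k := Real.sq_sqrt (by linarith)
      have hxw : x ≤ w := Real.sqrt_le_sqrt (by linarith)
      have hsx : s0 ≤ x := Real.sqrt_le_sqrt (by linarith)
      have hs02 : s0 ^ 2 = A := Real.sq_sqrt hA
      rw [div_le_iff₀ hws]
      nlinarith [mul_le_mul_of_nonneg_left (add_le_add hxw (le_refl s0)) (sub_nonneg.mpr hsx)]
    have hsum : V2 / (w + s0) ≤ ∑ k ∈ s, (Real.sqrt (A + b k) - Real.sqrt A) := by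
      rw [hV2, Finset.sum_div]
      exact Finset.sum_le_sum hterm
    have hfinal : Real.sqrt V2 ≤ s0 + V2 / (w + s0) := by
      rw [← sub_le_iff_le_add', le_div_iff₀ hws]
      have hw2 : w ^ 2 = A + V2 := Real.sq_sqrt (by linarith)
      have hV2' : Real.sqrt V2 ^ 2 = V2 := Real.sq_sqrt hV2nn
      have hs02 : s0 ^ 2 = A := Real.sq_sqrt hA
      nlinarith [mul_le_mul_of_nonneg_right hwV (le_of_lt hws)]
    linarith

theorem stmt_15 {Ω : Type*} [MeasurableSpace Ω] (μ : Measure Ω) [IsProbabilityMeasure μ]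
    (n : ℕ) (u v : ℕ → Ω → ℝ)
    (hu : ∀ k ∈ Finset.Icc 1 n, Integrable (u k) μ)
    (hv : ∀ k ∈ Finset.Icc 1 n, Integrable (v k) μ)
    (hu0 : ∀ k ∈ Finset.Icc 1 n, ∀ ω, 0 ≤ u k ω)
    (hv0 : ∀ k ∈ Finset.Icc 1 n, ∀ ω, 0 ≤ v k ω)
    (hyp : ∀ k ∈ Finset.Icc 1 n,
      (∫ ω, Real.sqrt ((∑ m ∈ Finset.Icc 1 (k - 1), u m ω ^ 2) + v k ω ^ 2) ∂μ)
        ≤ ∫ ω, Real.sqrt (∑ m ∈ Finset.Icc 1 k, u m ω ^ 2) ∂μ) :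
    (∫ ω, Real.sqrt (∑ m ∈ Finset.Icc 1 n, v m ω ^ 2) ∂μ)
      ≤ 2 * ∫ ω, Real.sqrt (∑ m ∈ Finset.Icc 1 n, u m ω ^ 2) ∂μ := by
  classical
  set g : ℕ → Ω → ℝ := fun k ω => Real.sqrt (∑ m ∈ Finset.Icc 1 k, u m ω ^ 2) with hgdef
  set T : ℕ → Ω → ℝ := fun k ω =>
    Real.sqrt ((∑ m ∈ Finset.Icc 1 (k - 1), u m ω ^ 2) + v k ω ^ 2) with hTdef
  -- measurability of g k
  have hmg : ∀ k, k ≤ n → AEStronglyMeasurable (g k) μ := by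
    intro k hk
    apply Continuous.comp_aestronglyMeasurable Real.continuous_sqrt
    apply Finset.aestronglyMeasurable_fun_sum
    intro m hm
    have hm' : m ∈ Finset.Icc 1 n := by
      simp only [Finset.mem_Icc] at hm ⊢; exact ⟨hm.1, hm.2.trans hk⟩
    exact ((hu m hm').aestronglyMeasurable).pow 2
  -- integrability of g k
  have hgi : ∀ k, k ≤ n → Integrable (g k) μ := by
    intro k hk
    have hb : Integrable (fun ω => ∑ m ∈ Finset.Icc 1 k, |u m ω|) μ := by
      apply integrable_finset_sum
      intro m hm
      have hm' : m ∈ Finset.Icc 1 n := by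
        simp only [Finset.mem_Icc] at hm ⊢; exact ⟨hm.1, hm.2.trans hk⟩
      exact (hu m hm').abs
    refine hb.mono' (hmg k hk) ?_
    filter_upwards with ω
    rw [Real.norm_eq_abs, abs_of_nonneg (Real.sqrt_nonneg _)]
    exact aux_sqrt_sum_sq_le _ _
  -- integrability of T k
  have hTi : ∀ k ∈ Finset.Icc 1 n, Integrable (T k) μ := by
    intro k hk
    have hk' : k - 1 ≤ n := by
      simp only [Finset.mem_Icc] at hk; omega
    have hmeas : AEStronglyMeasurable (T k) μ := by
      apply Continuous.comp_aestronglyMeasurable Real.continuous_sqrt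
      apply AEStronglyMeasurable.add
      · apply Finset.aestronglyMeasurable_fun_sum
        intro m hm
        have hm' : m ∈ Finset.Icc 1 n := by
          simp only [Finset.mem_Icc] at hm ⊢; exact ⟨hm.1, hm.2.trans hk'⟩
        exact ((hu m hm').aestronglyMeasurable).pow 2
      · exact ((hv k hk).aestronglyMeasurable).pow 2
    refine ((hgi (k - 1) hk').add (hv k hk).abs).mono' hmeas ?_
    filter_upwards with ω
    rw [Real.norm_eq_abs, abs_of_nonneg (Real.sqrt_nonneg _)]
    calc Real.sqrt ((∑ m ∈ Finset.Icc 1 (k - 1), u m ω ^ 2) + v k ω ^ 2)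
        ≤ Real.sqrt (∑ m ∈ Finset.Icc 1 (k - 1), u m ω ^ 2) + Real.sqrt (v k ω ^ 2) :=
          aux_sqrt_add_le _ _ (Finset.sum_nonneg fun m _ => sq_nonneg _) (sq_nonneg _)
      _ = g (k - 1) ω + |v k ω| := by rw [Real.sqrt_sq_eq_abs]
  -- integrability of V
  have hVi : Integrable (fun ω => Real.sqrt (∑ m ∈ Finset.Icc 1 n, v m ω ^ 2)) μ := by
    have hmeas : AEStronglyMeasurable (fun ω => Real.sqrt (∑ m ∈ Finset.Icc 1 n, v m ω ^ 2)) μ := by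
      apply Continuous.comp_aestronglyMeasurable Real.continuous_sqrt
      apply Finset.aestronglyMeasurable_fun_sum
      exact fun m hm => ((hv m hm).aestronglyMeasurable).pow 2
    have hb : Integrable (fun ω => ∑ m ∈ Finset.Icc 1 n, |v m ω|) μ :=
      integrable_finset_sum _ (fun m hm => (hv m hm).abs)
    refine hb.mono' hmeas ?_
    filter_upwards with ω
    rw [Real.norm_eq_abs, abs_of_nonneg (Real.sqrt_nonneg _)]
    exact aux_sqrt_sum_sq_le _ _
  -- pointwise inequality
  have hpt : ∀ ω, Real.sqrt (∑ m ∈ Finset.Icc 1 n, v m ω ^ 2)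
      ≤ g n ω + ∑ k ∈ Finset.Icc 1 n, (T k ω - g (k - 1) ω) := by
    intro ω
    have hA : (0:ℝ) ≤ ∑ m ∈ Finset.Icc 1 n, u m ω ^ 2 :=
      Finset.sum_nonneg fun m _ => sq_nonneg _
    have h1 := aux_pointwise (Finset.Icc 1 n) (∑ m ∈ Finset.Icc 1 n, u m ω ^ 2)
      (fun k => v k ω ^ 2) hA (fun k _ => sq_nonneg _)
    have h2 : ∑ k ∈ Finset.Icc 1 n,
        (Real.sqrt ((∑ m ∈ Finset.Icc 1 n, u m ω ^ 2) + v k ω ^ 2)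
          - Real.sqrt (∑ m ∈ Finset.Icc 1 n, u m ω ^ 2))
        ≤ ∑ k ∈ Finset.Icc 1 n, (T k ω - g (k - 1) ω) := by
      apply Finset.sum_le_sum
      intro k hk
      exact aux_sqrt_diff_mono (∑ m ∈ Finset.Icc 1 (k - 1), u m ω ^ 2)
        (∑ m ∈ Finset.Icc 1 n, u m ω ^ 2) (v k ω ^ 2)
        (Finset.sum_nonneg fun m _ => sq_nonneg _)
        (Finset.sum_le_sum_of_subset_of_nonneg
          (Finset.Icc_subset_Icc_right (by simp only [Finset.mem_Icc] at hk; omega))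
          (fun m _ _ => sq_nonneg _))
        (sq_nonneg _)
    calc Real.sqrt (∑ m ∈ Finset.Icc 1 n, v m ω ^ 2) ≤ _ := h1
      _ ≤ g n ω + ∑ k ∈ Finset.Icc 1 n, (T k ω - g (k - 1) ω) := by
          apply add_le_add le_rfl h2
  -- RHS integrable
  have hRi : Integrable (fun ω => g n ω + ∑ k ∈ Finset.Icc 1 n, (T k ω - g (k - 1) ω)) μ := by
    apply (hgi n le_rfl).add
    apply integrable_finset_sum
    intro k hk
    exact (hTi k hk).sub (hgi (k - 1) (by simp only [Finset.mem_Icc] at hk; omega))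
  -- integrate
  have hint : (∫ ω, Real.sqrt (∑ m ∈ Finset.Icc 1 n, v m ω ^ 2) ∂μ)
      ≤ ∫ ω, (g n ω + ∑ k ∈ Finset.Icc 1 n, (T k ω - g (k - 1) ω)) ∂μ :=
    integral_mono hVi hRi hpt
  have hsplit : (∫ ω, (g n ω + ∑ k ∈ Finset.Icc 1 n, (T k ω - g (k - 1) ω)) ∂μ)
      = (∫ ω, g n ω ∂μ) + ∑ k ∈ Finset.Icc 1 n, ((∫ ω, T k ω ∂μ) - ∫ ω, g (k - 1) ω ∂μ) := by
    rw [integral_add (hgi n le_rfl)]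
    · congr 1
      rw [integral_finset_sum]
      · apply Finset.sum_congr rfl
        intro k hk
        exact integral_sub (hTi k hk) (hgi (k - 1) (by simp only [Finset.mem_Icc] at hk; omega))
      · intro k hk
        exact (hTi k hk).sub (hgi (k - 1) (by simp only [Finset.mem_Icc] at hk; omega))
    · apply integrable_finset_sum
      intro k hk
      exact (hTi k hk).sub (hgi (k - 1) (by simp only [Finset.mem_Icc] at hk; omega))
  have hstep : ∑ k ∈ Finset.Icc 1 n, ((∫ ω, T k ω ∂μ) - ∫ ω, g (k - 1) ω ∂μ)
      ≤ ∑ k ∈ Finset.Icc 1 n, ((∫ ω, g k ω ∂μ) - ∫ ω, g (k - 1) ω ∂μ) := by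
    apply Finset.sum_le_sum
    intro k hk
    have := hyp k hk
    simp only [hgdef, hTdef]
    linarith [hyp k hk]
  have hg0 : (∫ ω, g 0 ω ∂μ) = 0 := by
    have : ∀ ω, g 0 ω = 0 := by
      intro ω
      simp [hgdef, Finset.Icc_eq_empty (by norm_num : ¬(1:ℕ) ≤ 0)]
    simp only [this]
    exact integral_zero _ _
  have htel : ∑ k ∈ Finset.Icc 1 n, ((∫ ω, g k ω ∂μ) - ∫ ω, g (k - 1) ω ∂μ)
      = ∫ ω, g n ω ∂μ := by
    have h1 : ∑ k ∈ Finset.Icc 1 n, ((∫ ω, g k ω ∂μ) - ∫ ω, g (k - 1) ω ∂μ)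
        = ∑ i ∈ Finset.range n, ((∫ ω, g (i + 1) ω ∂μ) - ∫ ω, g i ω ∂μ) := by
      rw [← Finset.Ico_add_one_right_eq_Icc, Finset.sum_Ico_eq_sum_range]
      simp [Nat.add_comm]
    rw [h1, Finset.sum_range_sub (fun i => ∫ ω, g i ω ∂μ), hg0, sub_zero]
  calc (∫ ω, Real.sqrt (∑ m ∈ Finset.Icc 1 n, v m ω ^ 2) ∂μ)
      ≤ (∫ ω, g n ω ∂μ) + ∑ k ∈ Finset.Icc 1 n, ((∫ ω, T k ω ∂μ) - ∫ ω, g (k - 1) ω ∂μ) := by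
        rw [← hsplit]; exact hint
    _ ≤ (∫ ω, g n ω ∂μ) + ∑ k ∈ Finset.Icc 1 n, ((∫ ω, g k ω ∂μ) - ∫ ω, g (k - 1) ω ∂μ) :=
        add_le_add le_rfl hstep
    _ = 2 * ∫ ω, g n ω ∂μ := by rw [htel]; ring
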